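/- Let A be a unital C*-algebra and let U = (u_{a,x})_{a,x=1}^n be a bi-unitary matrix over A whose entries satisfy u_{a,x} u_{a,y}^* = 0 for x ≠ y and u_{a,x} u_{b,x}^* = 0 for a ≠ b. Setting p_{a,x} = u_{a,x}^* u_{a,x}, the matrix (p_{a,x})_{a,x=1}^n is a magic unitary: each p_{a,x} is a projection and Σ_a p_{a,x} = 1 = Σ_x p_{a,x} for all a, x. -/
import Mathlib


/-- (u_{a,x}^* u_{a,x}) is a magic unitary. -/
theorem stmt3 {A : Type*} [NormedRing A] [StarRing A] [CStarRing A]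
    [CompleteSpace A] [NormedAlgebra ℂ A] [StarModule ℂ A]
    (n : ℕ) (u : Fin n → Fin n → A)
    (hUU : ∀ a b : Fin n, ∑ x, u a x * star (u b x) = if a = b then 1 else 0)
    (hUU' : ∀ x y : Fin n, ∑ a, star (u a x) * u a y = if x = y then 1 else 0)
    (hUt : ∀ x y : Fin n, ∑ a, u a x * star (u a y) = if x = y then 1 else 0)
    (hUt' : ∀ a b : Fin n, ∑ x, star (u a x) * u b x = if a = b then 1 else 0)
    (hrow : ∀ (a : Fin n) {x y : Fin n}, x ≠ y → u a x * star (u a y) = 0)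
    (hcol : ∀ (x : Fin n) {a b : Fin n}, a ≠ b → u a x * star (u b x) = 0)
    (p : Fin n → Fin n → A) (hp : ∀ a x, p a x = star (u a x) * u a x) :
    (∀ a x, p a x * p a x = p a x ∧ star (p a x) = p a x) ∧
    (∀ x, ∑ a, p a x = 1) ∧ (∀ a, ∑ x, p a x = 1) := by
  have key : ∀ a x, u a x * star (u a x) * u a x = u a x := by
    intro a x
    have h1 : u a x * (∑ y, star (u a y) * u a y) = u a x := by
      rw [hUt' a a, if_pos rfl, mul_one]
    calc u a x * star (u a x) * u a x
        = ∑ y, u a x * (star (u a y) * u a y) := by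
          rw [Finset.sum_eq_single x]
          · rw [mul_assoc]
          · intro y _ hy
            rw [← mul_assoc, hrow a (Ne.symm hy), zero_mul]
          · simp
      _ = u a x := by rw [← Finset.mul_sum, h1]
  refine ⟨fun a x => ⟨?_, ?_⟩, fun x => ?_, fun a => ?_⟩
  · rw [hp]
    calc star (u a x) * u a x * (star (u a x) * u a x)
        = star (u a x) * (u a x * star (u a x) * u a x) := by simp [mul_assoc]
      _ = star (u a x) * u a x := by rw [key]
  · rw [hp]; simp [mul_comm, star_mul]
  · simp only [hp]; rw [hUU' x x, if_pos rfl]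
  · simp only [hp]; rw [hUt' a a, if_pos rfl]
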